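/- arXiv:1506.05770 — 5 statements merged into one kernel-verified Lean document; each statement's English description precedes it below -/
import Mathlib

section
/- Let (Ā, B̄) be an interconnected structural system with subsystems (Ā_1, B̄_1), …, (Ā_r, B̄_r) and arbitrary interconnection patterns Ē_{i,j}. If every subsystem (Ā_i, B̄_i), i = 1,…,r, is structurally controllable, then the overall interconnected system (Ā, B̄) is structurally controllable. -/
open Matrix

/-- Controllability matrix `[B, AB, …, A^{n-1}B]` (columns indexed by `Fin (card X) × U`). -/
def ctrbMatrix {X U : Type*} [Fintype X] [DecidableEq X]
    (A : Matrix X X ℝ) (B : Matrix X U ℝ) :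
    Matrix X (Fin (Fintype.card X) × U) ℝ :=
  fun i kj => (A ^ (kj.1 : ℕ) * B) i kj.2

/-- A real pair `(A,B)` is controllable if its controllability matrix has full rank. -/
def Controllable {X U : Type*} [Fintype X] [DecidableEq X] [Fintype U]
    (A : Matrix X X ℝ) (B : Matrix X U ℝ) : Prop :=
  (ctrbMatrix A B).rank = Fintype.card X

/-- `M` has the same sparsity pattern as the Boolean matrix `Mb`. -/
def SameSparsity {X Y : Type*} (M : Matrix X Y ℝ) (Mb : Matrix X Y Bool) : Prop :=
  ∀ i j, M i j = 0 ↔ Mb i j = false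

/-- Structural controllability of a structural (Boolean) pair. -/
def StructurallyControllable {X U : Type*} [Fintype X] [DecidableEq X] [Fintype U]
    (Ab : Matrix X X Bool) (Bb : Matrix X U Bool) : Prop :=
  ∃ A : Matrix X X ℝ, ∃ B : Matrix X U ℝ,
    SameSparsity A Ab ∧ SameSparsity B Bb ∧ Controllable A B

/-- Edge relation of the system digraph `D(Ā,B̄)`. -/
def sysDigraphRel {X U : Type*} (Ab : Matrix X X Bool) (Bb : Matrix X U Bool) :
    (X ⊕ U) → (X ⊕ U) → Prop :=
  fun v w => match v, w with
  | Sum.inl j, Sum.inl i => Ab i j = true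
  | Sum.inr k, Sum.inl i => Bb i k = true
  | _, Sum.inr _ => False

/-- A state vertex is input-reachable if some input vertex has a directed path to it. -/
def InputReachable {X U : Type*} (Ab : Matrix X X Bool) (Bb : Matrix X U Bool) (x : X) : Prop :=
  ∃ u : U, Relation.ReflTransGen (sysDigraphRel Ab Bb) (Sum.inr u) (Sum.inl x)

/-- Edge relation of the system bipartite graph `B(Ā,B̄)` (left = states ⊕ inputs, right = states). -/
def sysBipEdge {X U : Type*} (Ab : Matrix X X Bool) (Bb : Matrix X U Bool) :
    (X ⊕ U) → X → Prop :=
  fun v i => match v with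
  | Sum.inl j => Ab i j = true
  | Sum.inr k => Bb i k = true

/-- Edge relation of the state bipartite graph `B(Ā)`. -/
def stateBipEdge {X : Type*} (Ab : Matrix X X Bool) : X → X → Prop :=
  fun j i => Ab i j = true

/-- A matching of a bipartite graph with edge relation `E`: a set of edges sharing no
left vertex and no right vertex. -/
def IsMatching {α β : Type*} (E : α → β → Prop) (M : Set (α × β)) : Prop :=
  (∀ e ∈ M, E e.1 e.2) ∧
  (∀ e ∈ M, ∀ f ∈ M, e.1 = f.1 → e = f) ∧
  (∀ e ∈ M, ∀ f ∈ M, e.2 = f.2 → e = f)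

/-- Right vertices belonging to no edge of `M`. -/
def rightUnmatched {α β : Type*} (M : Set (α × β)) : Set β :=
  {b | ∀ e ∈ M, e.2 ≠ b}

/-- Left vertices belonging to no edge of `M`. -/
def leftUnmatched {α β : Type*} (M : Set (α × β)) : Set α :=
  {a | ∀ e ∈ M, e.1 ≠ a}

/-- A maximum matching: a matching of the largest cardinality. -/
def IsMaxMatching {α β : Type*} (E : α → β → Prop) (M : Set (α × β)) : Prop :=
  IsMatching E M ∧ ∀ M' : Set (α × β), IsMatching E M' → M'.ncard ≤ M.ncard

/-- `S` is a strongly connected component of the digraph with edge relation `R`. -/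
def IsSCC {V : Type*} (R : V → V → Prop) (S : Set V) : Prop :=
  S.Nonempty ∧ (∀ u ∈ S, ∀ v ∈ S, Relation.ReflTransGen R u v) ∧
  ∀ w : V, (∀ u ∈ S, Relation.ReflTransGen R u w ∧ Relation.ReflTransGen R w u) → w ∈ S

/-- An SCC is non-top linked if it has no incoming edge from outside. -/
def NonTopLinked {V : Type*} (R : V → V → Prop) (S : Set V) : Prop :=
  ∀ u v : V, R u v → v ∈ S → u ∈ S

/-- Dynamics pattern `(I_r ⊗ Ā') ∨ (Ē ⊗ H̄)` of a system of `r` similar subsystems. -/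
def simA {n : ℕ} (r : ℕ) (A' H : Matrix (Fin n) (Fin n) Bool)
    (E : Matrix (Fin r) (Fin r) Bool) :
    Matrix (Fin r × Fin n) (Fin r × Fin n) Bool :=
  fun q q' => ((if q.1 = q'.1 then A' q.2 q'.2 else false) || (E q.1 q'.1 && H q.2 q'.2))

/-- Input pattern `I_r ⊗ B̄'` of a system of `r` similar subsystems. -/
def simB {n p : ℕ} (r : ℕ) (B' : Matrix (Fin n) (Fin p) Bool) :
    Matrix (Fin r × Fin n) (Fin r × Fin p) Bool :=
  fun q k => if q.1 = k.1 then B' q.2 k.2 else false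

/-- Entrywise OR of Boolean matrices. -/
def orMat {X Y : Type*} (M N : Matrix X Y Bool) : Matrix X Y Bool :=
  fun i j => M i j || N i j

/-- Dynamics pattern of an interconnected system: diagonal blocks `Ā_i`,
off-diagonal blocks `Ē_{i,j}`. -/
def interA {r : ℕ} {n : Fin r → ℕ}
    (A : ∀ i, Matrix (Fin (n i)) (Fin (n i)) Bool)
    (E : ∀ i j, Matrix (Fin (n i)) (Fin (n j)) Bool) :
    Matrix (Σ i, Fin (n i)) (Σ i, Fin (n i)) Bool :=
  fun q q' => if h : q'.1 = q.1 then A q.1 q.2 (h ▸ q'.2) else E q.1 q'.1 q.2 q'.2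

/-- Input pattern of an interconnected system: block diagonal with blocks `B̄_i`. -/
def interB {r : ℕ} {n p : Fin r → ℕ}
    (B : ∀ i, Matrix (Fin (n i)) (Fin (p i)) Bool) :
    Matrix (Σ i, Fin (n i)) (Σ i, Fin (p i)) Bool :=
  fun q k => if h : k.1 = q.1 then B q.1 q.2 (h ▸ k.2) else false

lemma my_rank_eq_card_iff_surjective {X Y : Type*} [Fintype X] [Fintype Y]
    (M : Matrix X Y ℝ) :
    M.rank = Fintype.card X ↔ Function.Surjective M.mulVecLin := by
  rw [Matrix.rank, ← LinearMap.range_eq_top]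
  constructor
  · intro h
    apply Submodule.eq_top_of_finrank_eq
    rw [h, Module.finrank_fintype_fun_eq_card]
  · intro h
    rw [h, finrank_top, Module.finrank_fintype_fun_eq_card]

lemma my_det_ne_zero_iff_rank_eq_card {X : Type*} [Fintype X] [DecidableEq X]
    (M : Matrix X X ℝ) : M.det ≠ 0 ↔ M.rank = Fintype.card X := by
  constructor
  · intro h
    exact M.rank_of_isUnit (M.isUnit_iff_isUnit_det.mpr (isUnit_iff_ne_zero.mpr h))
  · intro h
    have hs := (my_rank_eq_card_iff_surjective M).mp h
    choose v hv using fun j : X => hs (fun i => if i = j then 1 else 0)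
    have hN : M * (Matrix.of fun i j => v j i) = 1 := by
      ext i j
      have := congrFun (hv j) i
      simpa [Matrix.mul_apply, Matrix.mulVecLin_apply, Matrix.mulVec, dotProduct,
        Matrix.one_apply] using this
    exact Matrix.det_ne_zero_of_right_inverse hN

lemma my_controllable_iff_det {X U : Type*} [Fintype X] [DecidableEq X] [Fintype U]
    (A : Matrix X X ℝ) (B : Matrix X U ℝ) :
    Controllable A B ↔ (ctrbMatrix A B * (ctrbMatrix A B)ᵀ).det ≠ 0 := by
  rw [Controllable, my_det_ne_zero_iff_rank_eq_card, Matrix.rank_self_mul_transpose]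

lemma my_controllable_iff_surj {X U : Type*} [Fintype X] [DecidableEq X] [Fintype U]
    (A : Matrix X X ℝ) (B : Matrix X U ℝ) :
    Controllable A B ↔ Function.Surjective (ctrbMatrix A B).mulVecLin :=
  my_rank_eq_card_iff_surjective _

lemma my_blockDiag_controllable {r : ℕ} {n p : Fin r → ℕ}
    (Ar : ∀ i, Matrix (Fin (n i)) (Fin (n i)) ℝ)
    (Br : ∀ i, Matrix (Fin (n i)) (Fin (p i)) ℝ)
    (h : ∀ i, Controllable (Ar i) (Br i)) :
    Controllable (Matrix.blockDiagonal' Ar) (Matrix.blockDiagonal' Br) := by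
  rw [my_controllable_iff_surj]
  intro y
  have hsurj : ∀ i, Function.Surjective (ctrbMatrix (Ar i) (Br i)).mulVecLin :=
    fun i => (my_controllable_iff_surj _ _).mp (h i)
  choose c hc using fun i => hsurj i (fun a => y ⟨i, a⟩)
  have hle : ∀ i : Fin r, Fintype.card (Fin (n i)) ≤ Fintype.card (Σ i, Fin (n i)) :=
    by
    intro i
    exact Fintype.card_le_of_injective (fun a => (⟨i, a⟩ : Σ i, Fin (n i)))
      (fun a b hab => by simpa using hab)
  refine ⟨fun kq => if h' : (kq.1 : ℕ) < Fintype.card (Fin (n kq.2.1))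
      then c kq.2.1 (⟨kq.1, h'⟩, kq.2.2) else 0, ?_⟩
  funext ⟨j, a⟩
  have hblock : ∀ (k : ℕ),
      (Matrix.blockDiagonal' Ar) ^ k * Matrix.blockDiagonal' Br
        = Matrix.blockDiagonal' (fun t => Ar t ^ k * Br t) := by
    intro k
    rw [← Matrix.blockDiagonal'_pow, ← Matrix.blockDiagonal'_mul]
    rfl
  -- abbreviations
  set N := Fintype.card (Σ i, Fin (n i)) with hNdef
  -- the function of natural k
  classical
  have main : (∑ kq : Fin N × (Σ i, Fin (p i)),
      ctrbMatrix (Matrix.blockDiagonal' Ar) (Matrix.blockDiagonal' Br) ⟨j, a⟩ kq *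
        (if h' : (kq.1 : ℕ) < Fintype.card (Fin (n kq.2.1))
          then c kq.2.1 (⟨kq.1, h'⟩, kq.2.2) else 0)) = y ⟨j, a⟩ := by
    rw [Fintype.sum_prod_type]
    -- inner sum over sigma
    have step1 : ∀ k : Fin N,
        (∑ q : Σ i, Fin (p i),
          ctrbMatrix (Matrix.blockDiagonal' Ar) (Matrix.blockDiagonal' Br) ⟨j, a⟩ (k, q) *
            (if h' : (k : ℕ) < Fintype.card (Fin (n q.1))
              then c q.1 (⟨k, h'⟩, q.2) else 0))
        = (if h' : (k : ℕ) < Fintype.card (Fin (n j)) then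
            ∑ u : Fin (p j), (Ar j ^ (k:ℕ) * Br j) a u * c j (⟨k, h'⟩, u) else 0) := by
      intro k
      rw [← Finset.univ_sigma_univ, Finset.sum_sigma]
      rw [Finset.sum_eq_single j]
      · simp only [ctrbMatrix, hblock]
        by_cases h' : (k : ℕ) < Fintype.card (Fin (n j))
        · rw [dif_pos h']
          refine Finset.sum_congr rfl fun u _ => ?_
          rw [Matrix.blockDiagonal'_apply_eq, dif_pos h']
        · rw [dif_neg h']
          refine Finset.sum_eq_zero fun u _ => ?_
          rw [dif_neg h', mul_zero]
      · intro i _ hij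
        refine Finset.sum_eq_zero fun u _ => ?_
        simp only [ctrbMatrix, hblock]
        rw [Matrix.blockDiagonal'_apply_ne _ _ _ (Ne.symm hij), zero_mul]
      · intro hj; exact absurd (Finset.mem_univ j) hj
    rw [Finset.sum_congr rfl (fun k _ => step1 k)]
    -- now sum over k of a dite; convert to ℕ-sums
    have := congrFun (hc j) a
    simp only [Matrix.mulVecLin_apply, Matrix.mulVec, dotProduct] at this
    rw [← this]
    -- RHS: sum over Fin (card (Fin (n j))) × Fin (p j)
    rw [Fintype.sum_prod_type]
    set m := Fintype.card (Fin (n j)) with hm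
    have hG : ∀ G : ℕ → ℝ,
        (∑ k : Fin N, (if h' : (k : ℕ) < m then G (k : ℕ) else 0))
          = ∑ k : Fin m, G (k : ℕ) → True := fun _ _ => trivial
    -- define G
    let G : ℕ → ℝ := fun k => if h' : k < m then
        ∑ u : Fin (p j), (Ar j ^ k * Br j) a u * c j (⟨k, h'⟩, u) else 0
    have hL : (∑ k : Fin N, (if h' : (k : ℕ) < m then
          ∑ u : Fin (p j), (Ar j ^ (k:ℕ) * Br j) a u * c j (⟨k, h'⟩, u) else 0))
        = ∑ k ∈ Finset.range N, G k := by
      rw [← Fin.sum_univ_eq_sum_range]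
    have hR : (∑ k' : Fin m, ∑ u : Fin (p j),
          ctrbMatrix (Ar j) (Br j) a (k', u) * c j (k', u))
        = ∑ k ∈ Finset.range m, G k := by
      rw [← Fin.sum_univ_eq_sum_range]
      refine Finset.sum_congr rfl fun k' _ => ?_
      simp only [G, ctrbMatrix]
      rw [dif_pos k'.2]
    rw [hL, hR]
    symm
    apply Finset.sum_subset
    · exact Finset.range_mono (hle j)
    · intro k _ hk
      simp only [Finset.mem_range, not_lt] at hk
      exact dif_neg (not_lt.mpr hk)
  calc (ctrbMatrix (Matrix.blockDiagonal' Ar) (Matrix.blockDiagonal' Br)).mulVecLin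
        (fun kq => if h' : (kq.1 : ℕ) < Fintype.card (Fin (n kq.2.1))
          then c kq.2.1 (⟨kq.1, h'⟩, kq.2.2) else 0) ⟨j, a⟩
      = ∑ kq : Fin N × (Σ i, Fin (p i)),
          ctrbMatrix (Matrix.blockDiagonal' Ar) (Matrix.blockDiagonal' Br) ⟨j, a⟩ kq *
            (if h' : (kq.1 : ℕ) < Fintype.card (Fin (n kq.2.1))
              then c kq.2.1 (⟨kq.1, h'⟩, kq.2.2) else 0) := by
        simp only [Matrix.mulVecLin_apply, Matrix.mulVec, dotProduct]
        rfl
    _ = y ⟨j, a⟩ := main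

/-- if every subsystem of an interconnected structural system is
structurally controllable, then the overall interconnected system is structurally
controllable (for arbitrary interconnection patterns). -/
theorem interconnected_struct_controllable_of_subsystems
    {r : ℕ} {n p : Fin r → ℕ}
    (A : ∀ i, Matrix (Fin (n i)) (Fin (n i)) Bool)
    (B : ∀ i, Matrix (Fin (n i)) (Fin (p i)) Bool)
    (E : ∀ i j, Matrix (Fin (n i)) (Fin (n j)) Bool)
    (hsub : ∀ i, StructurallyControllable (A i) (B i)) :
    StructurallyControllable (interA A E) (interB B) := by
  classical
  choose Ar Br hAs hBs hctrb using hsub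
  set A0 : Matrix (Σ i, Fin (n i)) (Σ i, Fin (n i)) ℝ := Matrix.blockDiagonal' Ar with hA0
  set B0 : Matrix (Σ i, Fin (n i)) (Σ i, Fin (p i)) ℝ := Matrix.blockDiagonal' Br with hB0
  set Nm : Matrix (Σ i, Fin (n i)) (Σ i, Fin (n i)) ℝ :=
    fun q q' => if q'.1 = q.1 then 0 else (if E q.1 q'.1 q.2 q'.2 then 1 else 0) with hNm
  -- the determinant function
  set f : ℝ → ℝ := fun ε =>
    (ctrbMatrix (A0 + ε • Nm) B0 * (ctrbMatrix (A0 + ε • Nm) B0)ᵀ).det with hf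
  -- continuity
  have hAcont : Continuous fun ε : ℝ => A0 + ε • Nm := by
    exact continuous_const.add (continuous_id.smul continuous_const)
  have hpow : ∀ k : ℕ, Continuous fun ε : ℝ => (A0 + ε • Nm) ^ k := by
    intro k
    induction k with
    | zero => simpa using continuous_const
    | succ k ih =>
      simp only [pow_succ]
      exact ih.matrix_mul hAcont
  have hCcont : Continuous fun ε : ℝ => ctrbMatrix (A0 + ε • Nm) B0 := by
    apply continuous_matrix
    intro i kj
    exact (((hpow kj.1).matrix_mul continuous_const).matrix_elem i kj.2)
  have hfcont : Continuous f := (hCcont.matrix_mul hCcont.matrix_transpose).matrix_det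
  -- f 0 ≠ 0
  have hf0 : f 0 ≠ 0 := by
    have h0 : A0 + (0:ℝ) • Nm = A0 := by simp
    have := (my_controllable_iff_det A0 B0).mp (my_blockDiag_controllable Ar Br hctrb)
    simpa [hf, h0] using this
  -- pick ε ≠ 0 with f ε ≠ 0
  obtain ⟨ε, hε0, hfε⟩ : ∃ ε : ℝ, ε ≠ 0 ∧ f ε ≠ 0 := by
    have hopen : IsOpen {x : ℝ | f x ≠ 0} := isOpen_compl_iff.mpr (isClosed_singleton.preimage hfcont)
    obtain ⟨δ, hδ, hball⟩ := Metric.isOpen_iff.mp hopen 0 hf0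
    refine ⟨δ / 2, by positivity, hball ?_⟩
    simp only [Metric.mem_ball, dist_zero_right, Real.norm_eq_abs]
    rw [abs_of_pos (by positivity)]
    linarith
  refine ⟨A0 + ε • Nm, B0, ?_, ?_, (my_controllable_iff_det _ _).mpr hfε⟩
  · rintro ⟨i, a⟩ ⟨j, b⟩
    by_cases hij : j = i
    · subst hij
      simp only [Matrix.add_apply, Matrix.smul_apply]
      simp only [interA, Matrix.add_apply, Matrix.smul_apply, hNm, hA0,
        Matrix.blockDiagonal'_apply_eq]
      simpa using hAs j a b
    · simp only [Matrix.add_apply, Matrix.smul_apply]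
      simp only [interA, Matrix.add_apply, Matrix.smul_apply, hNm, hA0]
      rw [Matrix.blockDiagonal'_apply_ne _ _ _ (fun h => hij h.symm), if_neg hij,
        dif_neg hij, zero_add]
      by_cases hE : E i j a b
      · simp [hE, hε0]
      · simp [hE]
  · rintro ⟨i, a⟩ ⟨j, u⟩
    by_cases hij : j = i
    · subst hij
      simp only [interB, hB0, Matrix.blockDiagonal'_apply_eq, dif_pos rfl]
      exact hBs j a u
    · simp only [interB, hB0]
      rw [Matrix.blockDiagonal'_apply_ne _ _ _ (fun h => hij h.symm), dif_neg hij]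
      simp
end

section
/- Let (Ā, B̄) be an interconnected structural system with r subsystems such that each subsystem state digraph D(Ā_i) is strongly connected. If a state vertex of the overall system digraph D(Ā, B̄) is reachable by a directed path from some input vertex, then it is reachable by a directed path that contains at most r interconnection edges, i.e., at most r edges (x_l, x_k) with x_l a state vertex of subsystem j, x_k a state vertex of subsystem i and i ≠ j. -/
open Matrix

/-- Whether a step between two vertices of the overall system digraph is an
interconnection edge, i.e. goes between state vertices of two distinct subsystems. -/
def isInterEdge {r : ℕ} {n p : Fin r → ℕ} :
    ((Σ i, Fin (n i)) ⊕ (Σ i, Fin (p i))) → ((Σ i, Fin (n i)) ⊕ (Σ i, Fin (p i))) → Bool :=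
  fun v w => match v, w with
  | Sum.inl a, Sum.inl b => decide (a.1 ≠ b.1)
  | _, _ => false

/-- Number of interconnection edges along a walk given by its list of vertices. -/
def interEdgeCount {r : ℕ} {n p : Fin r → ℕ}
    (l : List ((Σ i, Fin (n i)) ⊕ (Σ i, Fin (p i)))) : ℕ :=
  (l.zip l.tail).countP (fun e => isInterEdge e.1 e.2)


/-! ### Auxiliary development -/

section Aux

variable {r : ℕ} {n p : Fin r → ℕ}
  (A : ∀ i, Matrix (Fin (n i)) (Fin (n i)) Bool)
  (B : ∀ i, Matrix (Fin (n i)) (Fin (p i)) Bool)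
  (E : ∀ i j, Matrix (Fin (n i)) (Fin (n j)) Bool)

/-- Input-reachability with at most `m` interconnection edges, inductively. -/
inductive RW : (Σ i, Fin (n i)) → ℕ → Prop
  | base {i : Fin r} (a : Fin (n i)) (k : Fin (p i)) (h : B i a k = true) (m : ℕ) :
      RW ⟨i, a⟩ m
  | intra {i : Fin r} {a : Fin (n i)} {m : ℕ} (b : Fin (n i))
      (h : RW ⟨i, a⟩ m) (he : A i b a = true) : RW ⟨i, b⟩ m
  | inter {j : Fin r} {a : Fin (n j)} {m : ℕ} (i : Fin r) (b : Fin (n i))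
      (h : RW ⟨j, a⟩ m) (hne : j ≠ i) (he : E i j b a = true) : RW ⟨i, b⟩ (m + 1)

variable {A B E}

lemma RW.mono {x : Σ i, Fin (n i)} {m m' : ℕ} (hmm : m ≤ m') (h : RW A B E x m) :
    RW A B E x m' := by
  induction h generalizing m' with
  | base a k h m => exact RW.base a k h m'
  | intra b h he ih => exact RW.intra b (ih hmm) he
  | inter i b h hne he ih =>
      obtain ⟨m'', rfl⟩ : ∃ m'', m' = m'' + 1 := ⟨m' - 1, by omega⟩
      exact RW.inter i b (ih (by omega)) hne he

lemma RW.strong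
    (hstrong : ∀ i : Fin r, ∀ a b : Fin (n i),
      Relation.ReflTransGen (fun a b => A i b a = true) a b)
    {i : Fin r} {a : Fin (n i)} {m : ℕ} (h : RW A B E ⟨i, a⟩ m) (b : Fin (n i)) :
    RW A B E ⟨i, b⟩ m := by
  have hab := hstrong i a b
  induction hab with
  | refl => exact h
  | tail h1 h2 ih => exact RW.intra _ ih h2

lemma RW.base0 {x : Σ i, Fin (n i)} {m : ℕ} (h : RW A B E x m) :
    ∃ i : Fin r, ∃ a : Fin (n i), RW A B E ⟨i, a⟩ 0 := by
  induction h with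
  | base a k h m => exact ⟨_, _, RW.base a k h 0⟩
  | intra _ _ _ ih => exact ih
  | inter _ _ _ _ _ ih => exact ih

lemma RW.collapse {m : ℕ} (hc : ∀ z, RW A B E z (m + 1) → RW A B E z m)
    {y : Σ i, Fin (n i)} {c : ℕ} (h : RW A B E y c) : RW A B E y m := by
  induction h with
  | base a k h _ => exact RW.base a k h m
  | intra b h he ih => exact RW.intra b ih he
  | inter i b h hne he ih => exact hc _ (RW.inter i b ih hne he)

lemma RW.exists_collapse
    (hstrong : ∀ i : Fin r, ∀ a b : Fin (n i),
      Relation.ReflTransGen (fun a b => A i b a = true) a b)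
    {x : Σ i, Fin (n i)} {c : ℕ} (hx : RW A B E x c) :
    ∃ m < r, ∀ z, RW A B E z (m + 1) → RW A B E z m := by
  classical
  by_contra hcon
  push_neg at hcon
  set S : ℕ → Finset (Fin r) :=
    fun m => Finset.univ.filter (fun i => ∃ a, RW A B E ⟨i, a⟩ m) with hS
  have hmem : ∀ m (i : Fin r), i ∈ S m ↔ ∃ a, RW A B E ⟨i, a⟩ m := by
    intro m i; simp [hS]
  have hsub : ∀ m, S m ⊆ S (m + 1) := by
    intro m i hi
    rw [hmem] at hi ⊢
    obtain ⟨a, ha⟩ := hi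
    exact ⟨a, ha.mono (Nat.le_succ m)⟩
  have claim : ∀ m, m ≤ r → m + 1 ≤ (S m).card := by
    intro m
    induction m with
    | zero =>
        intro _
        obtain ⟨i, a, h0⟩ := hx.base0
        have : i ∈ S 0 := (hmem 0 i).2 ⟨a, h0⟩
        exact Finset.card_pos.2 ⟨i, this⟩
    | succ m ih =>
        intro hmr
        obtain ⟨z, hz1, hz2⟩ := hcon m (by omega)
        obtain ⟨zi, za⟩ := z
        have hzin : zi ∈ S (m + 1) := (hmem _ _).2 ⟨za, hz1⟩
        have hznot : zi ∉ S m := by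
          intro hmemz
          obtain ⟨a', ha'⟩ := (hmem _ _).1 hmemz
          exact hz2 (ha'.strong hstrong za)
        have hss : S m ⊂ S (m + 1) :=
          ⟨hsub m, fun hsub' => hznot (hsub' hzin)⟩
        have := Finset.card_lt_card hss
        have := ih (by omega)
        omega
  have hfin := claim r le_rfl
  have : (S r).card ≤ r := by
    simpa using Finset.card_le_card (Finset.subset_univ (S r))
  omega

/-- From actual reachability in the digraph to `RW`. -/
lemma reach_RW {u : Σ i, Fin (p i)} {v : (Σ i, Fin (n i)) ⊕ (Σ i, Fin (p i))}
    (h : Relation.ReflTransGen (sysDigraphRel (interA A E) (interB B)) (Sum.inr u) v) :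
    v = Sum.inr u ∨ ∃ y c, v = Sum.inl y ∧ RW A B E y c := by
  induction h with
  | refl => exact Or.inl rfl
  | @tail b v' h1 h2 ih =>
      cases v' with
      | inr w => cases b with
          | inl y => exact h2.elim
          | inr w' => exact h2.elim
      | inl y' =>
          obtain ⟨i, bb⟩ := y'
          cases b with
          | inr w' =>
              have hw : w' = u := by
                rcases ih with h | ⟨y, c, hy, _⟩
                · exact Sum.inr.inj h
                · exact absurd hy (by simp)
              subst hw
              obtain ⟨i', k⟩ := w'
              have h2' : interB B ⟨i, bb⟩ ⟨i', k⟩ = true := h2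
              unfold interB at h2'
              by_cases hii : i' = i
              · subst hii
                rw [dif_pos rfl] at h2'
                exact Or.inr ⟨⟨i', bb⟩, 0, rfl, RW.base bb k h2' 0⟩
              · rw [dif_neg hii] at h2'
                exact absurd h2' (by simp)
          | inl y =>
              obtain ⟨j, a⟩ := y
              have hRW : ∃ c, RW A B E ⟨j, a⟩ c := by
                rcases ih with h | ⟨y0, c, hy, hrw⟩
                · exact absurd h (by simp)
                · obtain rfl : (⟨j, a⟩ : Σ i, Fin (n i)) = y0 := Sum.inl.inj hy
                  exact ⟨c, hrw⟩
              obtain ⟨c, hrw⟩ := hRW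
              have h2' : interA A E ⟨i, bb⟩ ⟨j, a⟩ = true := h2
              unfold interA at h2'
              by_cases hji : j = i
              · subst hji
                rw [dif_pos rfl] at h2'
                exact Or.inr ⟨⟨j, bb⟩, c, rfl, RW.intra bb hrw h2'⟩
              · rw [dif_neg hji] at h2'
                exact Or.inr ⟨⟨i, bb⟩, c + 1, rfl, RW.inter i bb hrw hji h2'⟩

end Aux

section Lists

variable {r : ℕ} {n p : Fin r → ℕ}

lemma interEdgeCount_cons_cons (a b : (Σ i, Fin (n i)) ⊕ (Σ i, Fin (p i)))
    (l : List ((Σ i, Fin (n i)) ⊕ (Σ i, Fin (p i)))) :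
    interEdgeCount (a :: b :: l) =
      interEdgeCount (b :: l) + (if isInterEdge a b then 1 else 0) := by
  simp [interEdgeCount, List.countP_cons]

lemma interEdgeCount_singleton (a : (Σ i, Fin (n i)) ⊕ (Σ i, Fin (p i))) :
    interEdgeCount ([a] : List _) = 0 := by
  simp [interEdgeCount]

lemma interEdgeCount_snoc (a w : (Σ i, Fin (n i)) ⊕ (Σ i, Fin (p i)))
    (l : List ((Σ i, Fin (n i)) ⊕ (Σ i, Fin (p i)))) :
    interEdgeCount (a :: (l ++ [w])) =
      interEdgeCount (a :: l) +
        (if isInterEdge ((a :: l).getLast (List.cons_ne_nil _ _)) w then 1 else 0) := by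
  induction l generalizing a with
  | nil =>
      simp [interEdgeCount, List.countP_cons]
      congr
  | cons b l ih =>
      rw [show a :: ((b :: l) ++ [w]) = a :: b :: (l ++ [w]) by simp]
      rw [interEdgeCount_cons_cons, ih b, interEdgeCount_cons_cons]
      have : ((a :: b :: l).getLast (List.cons_ne_nil _ _)) =
          ((b :: l).getLast (List.cons_ne_nil _ _)) :=
        List.getLast_cons (List.cons_ne_nil _ _)
      rw [this]
      omega

lemma chain_snoc {α : Type*} {R : α → α → Prop} {a w : α} {l : List α}
    (h : List.Chain R a l) (he : R ((a :: l).getLast (List.cons_ne_nil _ _)) w) :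
    List.Chain R a (l ++ [w]) := by
  induction l generalizing a with
  | nil => simpa using List.Chain.cons (by simpa using he) List.Chain.nil
  | cons b l ih =>
      obtain ⟨hab, h'⟩ := List.chain_cons.1 h
      have he' : R ((b :: l).getLast (List.cons_ne_nil _ _)) w := by
        have : ((a :: b :: l).getLast (List.cons_ne_nil _ _)) =
            ((b :: l).getLast (List.cons_ne_nil _ _)) :=
          List.getLast_cons (List.cons_ne_nil _ _)
        rwa [this] at he
      exact List.chain_cons.2 ⟨hab, ih h' he'⟩

variable {A : ∀ i, Matrix (Fin (n i)) (Fin (n i)) Bool}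
  {B : ∀ i, Matrix (Fin (n i)) (Fin (p i)) Bool}
  {E : ∀ i j, Matrix (Fin (n i)) (Fin (n j)) Bool}

lemma RW.toList {y : Σ i, Fin (n i)} {m : ℕ} (h : RW A B E y m) :
    ∃ u : Σ i, Fin (p i),
      ∃ l : List ((Σ i, Fin (n i)) ⊕ (Σ i, Fin (p i))),
        List.Chain (sysDigraphRel (interA A E) (interB B)) (Sum.inr u) l ∧
        (Sum.inr u :: l).getLast (List.cons_ne_nil _ _) = Sum.inl y ∧
        interEdgeCount (Sum.inr u :: l) ≤ m := by
  induction h with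
  | @base i a k hB m =>
      refine ⟨⟨i, k⟩, [Sum.inl ⟨i, a⟩], ?_, by simp, ?_⟩
      · refine List.Chain.cons ?_ List.Chain.nil
        show interB B ⟨i, a⟩ ⟨i, k⟩ = true
        unfold interB
        rw [dif_pos rfl]
        exact hB
      · rw [interEdgeCount_cons_cons, interEdgeCount_singleton]
        simp [isInterEdge]
  | @intra i a m' b h he ih =>
      obtain ⟨u, l, hc, hl, hcnt⟩ := ih
      refine ⟨u, l ++ [Sum.inl ⟨i, b⟩], ?_, ?_, ?_⟩
      · apply chain_snoc hc
        rw [hl]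
        show interA A E ⟨i, b⟩ ⟨i, a⟩ = true
        unfold interA
        rw [dif_pos rfl]
        exact he
      · show ((Sum.inr u :: l) ++ [Sum.inl (⟨i, b⟩ : Σ i, Fin (n i))]).getLast (by simp) = _
        exact List.getLast_append _
      · rw [interEdgeCount_snoc, hl]
        have : isInterEdge (p := p) (Sum.inl (⟨i, a⟩ : Σ i, Fin (n i)))
            (Sum.inl (⟨i, b⟩ : Σ i, Fin (n i))) = false := by
          simp [isInterEdge]
        rw [this]
        simpa using hcnt
  | @inter j a m' i b h hne he ih =>
      obtain ⟨u, l, hc, hl, hcnt⟩ := ih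
      refine ⟨u, l ++ [Sum.inl ⟨i, b⟩], ?_, ?_, ?_⟩
      · apply chain_snoc hc
        rw [hl]
        show interA A E ⟨i, b⟩ ⟨j, a⟩ = true
        unfold interA
        rw [dif_neg hne]
        exact he
      · show ((Sum.inr u :: l) ++ [Sum.inl (⟨i, b⟩ : Σ i, Fin (n i))]).getLast (by simp) = _
        exact List.getLast_append _
      · rw [interEdgeCount_snoc, hl]
        have : isInterEdge (p := p) (Sum.inl (⟨j, a⟩ : Σ i, Fin (n i)))
            (Sum.inl (⟨i, b⟩ : Σ i, Fin (n i))) = true := by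
          simp [isInterEdge, hne]
        rw [this, if_pos rfl]
        omega

end Lists

/-- in an interconnected system whose subsystem state digraphs are all
strongly connected, every input-reachable state vertex is reachable by a directed path
containing at most `r` interconnection edges. -/
theorem inputReachable_with_few_interconnection_edges
    {r : ℕ} {n p : Fin r → ℕ}
    (A : ∀ i, Matrix (Fin (n i)) (Fin (n i)) Bool)
    (B : ∀ i, Matrix (Fin (n i)) (Fin (p i)) Bool)
    (E : ∀ i j, Matrix (Fin (n i)) (Fin (n j)) Bool)
    (hstrong : ∀ i : Fin r, ∀ a b : Fin (n i),
      Relation.ReflTransGen (fun a b => A i b a = true) a b)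
    (x : Σ i, Fin (n i))
    (hreach : InputReachable (interA A E) (interB B) x) :
    ∃ u : Σ i, Fin (p i),
      ∃ l : List ((Σ i, Fin (n i)) ⊕ (Σ i, Fin (p i))),
        List.Chain (sysDigraphRel (interA A E) (interB B)) (Sum.inr u) l ∧
        (Sum.inr u :: l).getLast (List.cons_ne_nil _ _) = Sum.inl x ∧
        interEdgeCount (Sum.inr u :: l) ≤ r := by
  obtain ⟨u, hu⟩ := hreach
  rcases reach_RW hu with h | ⟨y, c, hy, hrw⟩
  · exact absurd h (by simp)
  · obtain rfl : x = y := Sum.inl.inj hy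
    obtain ⟨m, hmr, hcol⟩ := hrw.exists_collapse hstrong
    have hxr : RW A B E x r := (RW.collapse hcol hrw).mono (le_of_lt hmr)
    exact hxr.toList
end

section
/- The sufficient conditions of the cycle-spanning theorem for similar systems are not necessary: there exist n, p, r and Boolean matrices Ā', H̄ ∈ {0,1}^{n×n}, B̄' ∈ {0,1}^{n×p}, Ē ∈ {0,1}^{r×r} with Ē_{ii} = 0 such that (Ā', B̄') is not structurally controllable, the similar system (Ā, B̄) with Ā = (I_r ⊗ Ā') ∨ (Ē ⊗ H̄) and B̄ = I_r ⊗ B̄' is structurally controllable, and yet the condensed graph D(Ē) is not spanned by disjoint cycles, i.e., there is no permutation σ of {1,…,r} with Ē_{σ(i),i} = 1 for all i. -/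
open Matrix

set_option maxRecDepth 100000

lemma cons_val_five' {α : Type*} {m : ℕ} (x : α) (u : Fin (m + 4 + 1) → α) :
    Matrix.vecCons x u 5 =
      Matrix.vecHead (Matrix.vecTail (Matrix.vecTail (Matrix.vecTail (Matrix.vecTail u)))) :=
  rfl

-- Boolean patterns
def A'b : Matrix (Fin 2) (Fin 2) Bool := !![false, false; false, true]
def Hb : Matrix (Fin 2) (Fin 2) Bool := !![false, false; true, false]
def B'b : Matrix (Fin 2) (Fin 1) Bool := !![true; false]
def Eb : Matrix (Fin 3) (Fin 3) Bool := !![false, false, true; true, false, true; true, false, false]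

-- Real instance of the overall system
def Aex : Matrix (Fin 3 × Fin 2) (Fin 3 × Fin 2) ℝ := fun p q =>
  if p = (0,1) ∧ q = (0,1) then 1 else
  if p = (1,1) ∧ q = (1,1) then 2 else
  if p = (2,1) ∧ q = (2,1) then 3 else
  if p = (0,1) ∧ q = (2,0) then 1 else
  if p = (1,1) ∧ q = (2,0) then 1 else
  if p = (1,1) ∧ q = (0,0) then 1 else
  if p = (2,1) ∧ q = (0,0) then 1 else 0

def Bex : Matrix (Fin 3 × Fin 2) (Fin 3 × Fin 1) ℝ := fun p u =>
  if p.2 = 0 ∧ u.1 = p.1 then 1 else 0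

def ABex : Matrix (Fin 3 × Fin 2) (Fin 3 × Fin 1) ℝ := fun p u =>
  if p = (0,1) ∧ u.1 = 2 then 1 else
  if p = (1,1) ∧ u.1 = 2 then 1 else
  if p = (1,1) ∧ u.1 = 0 then 1 else
  if p = (2,1) ∧ u.1 = 0 then 1 else 0

def A2Bex : Matrix (Fin 3 × Fin 2) (Fin 3 × Fin 1) ℝ := fun p u =>
  if p = (0,1) ∧ u.1 = 2 then 1 else
  if p = (1,1) ∧ u.1 = 2 then 2 else
  if p = (1,1) ∧ u.1 = 0 then 2 else
  if p = (2,1) ∧ u.1 = 0 then 3 else 0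

lemma hAB : Aex * Bex = ABex := by
  ext p u
  fin_cases p <;> fin_cases u <;>
    simp (config := { decide := true })
      [Matrix.mul_apply, Fintype.sum_prod_type, Fin.sum_univ_succ, Aex, Bex, ABex]

lemma hA2B : Aex * ABex = A2Bex := by
  ext p u
  fin_cases p <;> fin_cases u <;>
    simp (config := { decide := true })
      [Matrix.mul_apply, Fintype.sum_prod_type, Fin.sum_univ_succ, Aex, ABex, A2Bex]

def eX : Fin 6 → Fin 3 × Fin 2 := ![(0,0),(1,0),(2,0),(0,1),(1,1),(2,1)]

def kL : Fin 6 → ℕ := ![0,0,0,1,1,2]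
def uL : Fin 6 → Fin 3 × Fin 1 := ![(0,0),(1,0),(2,0),(0,0),(2,0),(0,0)]

def gC : Fin 6 → Fin (Fintype.card (Fin 3 × Fin 2)) × (Fin 3 × Fin 1) :=
  fun j => (⟨kL j, by fin_cases j <;> decide⟩, uL j)

def Pm : Matrix (Fin 6) (Fin 3 × Fin 2) ℝ := fun j p => if eX j = p then 1 else 0
def Sm : Matrix (Fin (Fintype.card (Fin 3 × Fin 2)) × (Fin 3 × Fin 1)) (Fin 6) ℝ :=
  fun c j => if c = gC j then 1 else 0

def N0 : Matrix (Fin 6) (Fin 6) ℝ :=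
  !![1,0,0,0,0,0; 0,1,0,0,0,0; 0,0,1,0,0,0; 0,0,0,0,1,0; 0,0,0,1,1,2; 0,0,0,1,0,3]

lemma hPMS : ∀ (M : Matrix (Fin 3 × Fin 2) (Fin (Fintype.card (Fin 3 × Fin 2)) × (Fin 3 × Fin 1)) ℝ)
    (j j' : Fin 6), (Pm * M * Sm) j j' = M (eX j) (gC j') := by
  intro M j j'
  have h1 : ∀ c, (Pm * M) j c = M (eX j) c := by
    intro c
    simp [Matrix.mul_apply, Pm, ite_mul, Finset.sum_ite_eq]
  calc (Pm * M * Sm) j j' = ∑ c, (Pm * M) j c * Sm c j' := by rw [Matrix.mul_apply]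
    _ = M (eX j) (gC j') := by
        simp [h1, Sm, mul_ite, Finset.sum_ite_eq']

lemma hNeq : Pm * ctrbMatrix Aex Bex * Sm = N0 := by
  have hc : ∀ (j j' : Fin 6),
      (Pm * ctrbMatrix Aex Bex * Sm) j j' = (Aex ^ (kL j') * Bex) (eX j) (uL j') := by
    intro j j'
    rw [hPMS]
    rfl
  ext j j'
  rw [hc]
  fin_cases j <;> fin_cases j' <;>
    simp (config := { decide := true })
      [kL, pow_succ, pow_zero, one_mul, Matrix.mul_assoc, hAB, hA2B,
       eX, uL, Bex, ABex, A2Bex, N0, cons_val_five', Matrix.vecHead, Matrix.vecTail]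

lemma hdet : N0.det = -1 := by
  simp [Matrix.det_succ_row_zero, Fin.sum_univ_succ, N0, Fin.succAbove]
  norm_num

lemma overall_ctrb : Controllable Aex Bex := by
  have hcard : Fintype.card (Fin 3 × Fin 2) = 6 := by simp
  have hub : (ctrbMatrix Aex Bex).rank ≤ 6 := by
    simpa [hcard] using (ctrbMatrix Aex Bex).rank_le_card_height
  have hN0 : N0.rank = 6 := by
    have : IsUnit N0 := by
      rw [Matrix.isUnit_iff_isUnit_det, hdet]
      exact isUnit_iff_ne_zero.mpr (by norm_num)
    simpa using N0.rank_of_isUnit this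
  have hlb : 6 ≤ (ctrbMatrix Aex Bex).rank := by
    calc 6 = N0.rank := hN0.symm
      _ = (Pm * ctrbMatrix Aex Bex * Sm).rank := by rw [hNeq]
      _ ≤ (Pm * ctrbMatrix Aex Bex).rank := Matrix.rank_mul_le_left _ _
      _ ≤ (ctrbMatrix Aex Bex).rank := Matrix.rank_mul_le_right _ _
  exact (le_antisymm hub hlb).trans hcard.symm

def U1 : Matrix (Fin 2) (Fin 1) ℝ := fun i _ => if i = 0 then 1 else 0

lemma sub_not_ctrb : ¬ StructurallyControllable A'b B'b := by
  rintro ⟨A, B, hA, hB, hC⟩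
  have hB1 : B 1 0 = 0 := (hB 1 0).mpr (by decide)
  have hA10 : A 1 0 = 0 := (hA 1 0).mpr (by decide)
  have key : ∀ k : ℕ, (A ^ k * B) 1 0 = 0 := by
    intro k
    induction k with
    | zero => simpa using hB1
    | succ m ih =>
      have h : A ^ (m + 1) * B = A * (A ^ m * B) := by
        rw [pow_succ']; exact Matrix.mul_assoc _ _ _
      rw [h, Matrix.mul_apply, Fin.sum_univ_succ]
      simp [hA10, ih, Fin.sum_univ_succ]
  set M := ctrbMatrix A B with hM
  have hfact : M = U1 * Matrix.of (fun (_ : Fin 1) c => M 0 c) := by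
    ext i c
    obtain ⟨k, u⟩ := c
    have hu : u = 0 := Subsingleton.elim _ _
    subst hu
    by_cases h : i = 0
    · subst h
      simp [Matrix.mul_apply, U1]
    · have h1 : i = 1 := by
        have hlt := i.isLt
        have h0 : i.val ≠ 0 := fun hh => h (Fin.ext hh)
        apply Fin.ext
        omega
      subst h1
      have h0 : M 1 (k, 0) = 0 := by
        show (A ^ (k : ℕ) * B) 1 0 = 0
        exact key _
      have hr : (U1 * Matrix.of fun (_ : Fin 1) c => M 0 c) 1 (k, 0) = 0 := by
        simp [Matrix.mul_apply, U1]
      rw [h0, hr]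
  have hrank : M.rank ≤ 1 := by
    calc M.rank ≤ U1.rank := by rw [hfact]; exact Matrix.rank_mul_le_left _ _
      _ ≤ 1 := by simpa using U1.rank_le_card_width
  have h2 : M.rank = 2 := by rw [hM]; simpa [Controllable] using hC
  omega

lemma sparsA : SameSparsity Aex (simA 3 A'b Hb Eb) := by
  intro i j
  fin_cases i <;> fin_cases j <;>
    simp (config := { decide := true })
      [Aex, simA, A'b, Hb, Eb, Matrix.vecHead, Matrix.vecTail]

lemma sparsB : SameSparsity Bex (simB 3 B'b) := by
  intro i j
  fin_cases i <;> fin_cases j <;>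
    simp (config := { decide := true })
      [Bex, simB, B'b, Matrix.vecHead, Matrix.vecTail]

/-- the sufficient conditions of Theorem 2 are not necessary: there is a
similar system whose subsystem pattern `(Ā', B̄')` is not structurally controllable, whose
overall pattern `(Ā, B̄)` is structurally controllable, and whose condensed graph `D(Ē)` is
not spanned by disjoint cycles. -/
theorem cycle_spanning_condition_not_necessary :
    ∃ (n p r : ℕ) (A' H : Matrix (Fin n) (Fin n) Bool) (B' : Matrix (Fin n) (Fin p) Bool)
      (E : Matrix (Fin r) (Fin r) Bool),
      (∀ i, E i i = false) ∧
      ¬ StructurallyControllable A' B' ∧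
      StructurallyControllable (simA r A' H E) (simB r B') ∧
      ¬ ∃ σ : Equiv.Perm (Fin r), ∀ i : Fin r, E (σ i) i = true := by
  refine ⟨2, 1, 3, A'b, Hb, B'b, Eb, ?_, sub_not_ctrb, ⟨Aex, Bex, sparsA, sparsB, overall_ctrb⟩, ?_⟩
  · decide
  · decide
end

section
/- Let (Ā, B̄) be the structural pair composed of r similar subsystems parametrized by (Ā', B̄', H̄, Ē). If (Ā' ∨ H̄, B̄') is structurally controllable and the condensed graph D(Ē) has no source (for every i ∈ {1,…,r} there exists j with Ē_{ij} = 1), then every state vertex of the system digraph D(Ā, B̄) is input-reachable. -/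
open Matrix

/-- Structural controllability implies input-reachability of every state vertex. -/
theorem inputReachable_of_structurallyControllable
    {X U : Type*} [Fintype X] [DecidableEq X] [Fintype U]
    {Ab : Matrix X X Bool} {Bb : Matrix X U Bool}
    (h : StructurallyControllable Ab Bb) : ∀ x, InputReachable Ab Bb x := by
  obtain ⟨A, B, hA, hB, hc⟩ := h
  by_contra hx
  push_neg at hx
  obtain ⟨x, hx⟩ := hx
  have key : ∀ k : ℕ, ∀ y, ¬ InputReachable Ab Bb y → ∀ j, (A ^ k * B) y j = 0 := by
    intro k
    induction k with
    | zero =>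
      intro y hy j
      rw [pow_zero, Matrix.one_mul]
      by_contra hBy
      have hb : Bb y j = true := by
        rcases Bool.eq_false_or_eq_true (Bb y j) with h' | h'
        · exact h'
        · exact absurd ((hB y j).mpr h') hBy
      exact hy ⟨j, Relation.ReflTransGen.single hb⟩
    | succ k ih =>
      intro y hy j
      rw [pow_succ', Matrix.mul_assoc, Matrix.mul_apply]
      refine Finset.sum_eq_zero fun z _ => ?_
      rcases eq_or_ne (A y z) 0 with h0 | h0
      · rw [h0, zero_mul]
      · have hab : Ab y z = true := by
          rcases Bool.eq_false_or_eq_true (Ab y z) with h' | h'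
          · exact h'
          · exact absurd ((hA y z).mpr h') h0
        have hz : ¬ InputReachable Ab Bb z := by
          rintro ⟨u, hu⟩
          exact hy ⟨u, hu.tail hab⟩
        rw [ih z hz j, mul_zero]
  have hrow : ∀ kj, ctrbMatrix A B x kj = 0 := fun kj => key kj.1 x hx kj.2
  have hle : LinearMap.range (ctrbMatrix A B).mulVecLin ≤
      LinearMap.ker (LinearMap.proj x : ((X → ℝ) →ₗ[ℝ] ℝ)) := by
    rintro v ⟨c, rfl⟩
    simp only [LinearMap.mem_ker, LinearMap.proj_apply, Matrix.mulVecLin_apply,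
      Matrix.mulVec, dotProduct]
    exact Finset.sum_eq_zero fun j _ => by rw [hrow j, zero_mul]
  have hsurj : Function.Surjective (LinearMap.proj x : ((X → ℝ) →ₗ[ℝ] ℝ)) :=
    fun a => ⟨Pi.single x a, by simp⟩
  have hrn := LinearMap.finrank_range_add_finrank_ker
    (LinearMap.proj x : ((X → ℝ) →ₗ[ℝ] ℝ))
  rw [LinearMap.range_eq_top.mpr hsurj, finrank_top, Module.finrank_self,
    Module.finrank_fintype_fun_eq_card] at hrn
  have h1 : (ctrbMatrix A B).rank ≤
      Module.finrank ℝ (LinearMap.ker (LinearMap.proj x : ((X → ℝ) →ₗ[ℝ] ℝ))) :=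
    Submodule.finrank_mono hle
  have hcard : 1 ≤ Fintype.card X := Fintype.card_pos_iff.mpr ⟨x⟩
  rw [hc] at h1
  omega

/-- Lifting a path in the small system digraph to the composed system. -/
theorem lift_reach {n p r : ℕ}
    (A' H : Matrix (Fin n) (Fin n) Bool) (B' : Matrix (Fin n) (Fin p) Bool)
    (E : Matrix (Fin r) (Fin r) Bool)
    (hnosource : ∀ i : Fin r, ∃ j : Fin r, E i j = true)
    {u : Fin p} {v : Fin n ⊕ Fin p}
    (hpath : Relation.ReflTransGen (sysDigraphRel (orMat A' H) B') (Sum.inr u) v) :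
    ∀ q : Fin r, ∃ u' : Fin r × Fin p,
      Relation.ReflTransGen (sysDigraphRel (simA r A' H E) (simB r B')) (Sum.inr u')
        (Sum.elim (fun i => Sum.inl (q, i)) (fun k => Sum.inr (q, k)) v) := by
  induction hpath with
  | refl => intro q; exact ⟨(q, u), Relation.ReflTransGen.refl⟩
  | @tail b c hab hrel ih =>
    intro q
    match b, c, hrel with
    | Sum.inr k, Sum.inl i, hrel =>
      refine ⟨(q, k), Relation.ReflTransGen.single ?_⟩
      show simB r B' (q, i) (q, k) = true
      have hrelB : B' i k = true := hrel
      simpa [simB] using hrelB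
    | Sum.inl j, Sum.inl i, hrel =>
      have hrel' : A' i j = true ∨ H i j = true := by
        have : (A' i j || H i j) = true := hrel
        simpa using this
      rcases hrel' with hA' | hH
      · obtain ⟨u', hp⟩ := ih q
        refine ⟨u', hp.tail ?_⟩
        show simA r A' H E (q, i) (q, j) = true
        simp [simA, hA']
      · obtain ⟨q', hq'⟩ := hnosource q
        obtain ⟨u', hp⟩ := ih q'
        refine ⟨u', hp.tail ?_⟩
        show simA r A' H E (q, i) (q', j) = true
        simp [simA, hq', hH]

/-- for a system of `r` similar subsystems parametrized by
`(Ā', B̄', H̄, Ē)`, if `(Ā' ∨ H̄, B̄')` is structurally controllable and the condensed graph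
`D(Ē)` has no source, then every state vertex of `D(Ā, B̄)` is input-reachable. -/
theorem similar_system_inputReachable_of_no_source
    {n p : ℕ} {r : ℕ}
    (A' H : Matrix (Fin n) (Fin n) Bool) (B' : Matrix (Fin n) (Fin p) Bool)
    (E : Matrix (Fin r) (Fin r) Bool) (hE : ∀ i, E i i = false)
    (hsc : StructurallyControllable (orMat A' H) B')
    (hnosource : ∀ i : Fin r, ∃ j : Fin r, E i j = true) :
    ∀ x : Fin r × Fin n, InputReachable (simA r A' H E) (simB r B') x := by
  intro x
  obtain ⟨u, hpath⟩ := inputReachable_of_structurallyControllable hsc x.2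
  obtain ⟨u', hp⟩ := lift_reach A' H B' E hnosource hpath x.1
  exact ⟨u', by simpa using hp⟩
end

section
/- Let (Ā, B̄) be the structural pair composed of r similar subsystems parametrized by (Ā', B̄', H̄, Ē). If the state vertex of the overall system digraph D(Ā, B̄) corresponding to coordinate k of subsystem i (i.e., vertex x_{(i−1)n + k}) is input-reachable in D(Ā, B̄), then the state vertex x_k is input-reachable in the system digraph D(Ā' ∨ H̄, B̄'). Consequently, if D(Ā' ∨ H̄, B̄') has a state vertex that is not input-reachable, then D(Ā, B̄) has, in every subsystem, a state vertex that is not input-reachable. -/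
open Matrix

/-- for a system of `r` similar subsystems parametrized by
`(Ā', B̄', H̄, Ē)`, if the state vertex `(i, k)` (coordinate `k` of subsystem `i`) of the
overall system digraph `D(Ā, B̄)` is input-reachable, then the state vertex `x_k` is
input-reachable in `D(Ā' ∨ H̄, B̄')`.  Consequently, if `D(Ā' ∨ H̄, B̄')` has a state vertex
that is not input-reachable, then every subsystem of `D(Ā, B̄)` has a state vertex that is
not input-reachable. -/
theorem similar_system_inputReachable_projects
    {n p : ℕ} {r : ℕ}
    (A' H : Matrix (Fin n) (Fin n) Bool) (B' : Matrix (Fin n) (Fin p) Bool)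
    (E : Matrix (Fin r) (Fin r) Bool) (hE : ∀ i, E i i = false) :
    (∀ (i : Fin r) (k : Fin n),
      InputReachable (simA r A' H E) (simB r B') (i, k) →
        InputReachable (orMat A' H) B' k) ∧
    ((∃ k : Fin n, ¬ InputReachable (orMat A' H) B' k) →
      ∀ i : Fin r, ∃ k : Fin n,
        ¬ InputReachable (simA r A' H E) (simB r B') (i, k)) := by
  have proj : ∀ (i : Fin r) (k : Fin n),
      InputReachable (simA r A' H E) (simB r B') (i, k) →
        InputReachable (orMat A' H) B' k := by
    intro i k ⟨u, hu⟩
    -- project vertices by forgetting the subsystem index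
    let f : (Fin r × Fin n) ⊕ (Fin r × Fin p) → Fin n ⊕ Fin p :=
      fun v => match v with
        | Sum.inl q => Sum.inl q.2
        | Sum.inr q => Sum.inr q.2
    refine ⟨u.2, ?_⟩
    have := Relation.ReflTransGen.lift (r := sysDigraphRel (simA r A' H E) (simB r B'))
      (p := sysDigraphRel (orMat A' H) B') f ?_ _ _ hu
    · exact this
    · rintro (⟨a,b⟩|⟨a,b⟩) (⟨c,d⟩|⟨c,d⟩) h <;>
        simp only [sysDigraphRel, simA, simB, orMat, f] at h ⊢
      · rcases Bool.or_eq_true_iff.mp h with h1 | h1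
        · split at h1
          · simp [h1]
          · exact absurd h1 (by simp)
        · simp [Bool.and_eq_true_iff.mp h1 |>.2]
      · split at h
        · exact h
        · exact absurd h (by simp)
  refine ⟨proj, ?_⟩
  rintro ⟨k, hk⟩ i
  exact ⟨k, fun h => hk (proj i k h)⟩
end
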